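/- As μ → 0⁺, g(μ)/μ^{3/2} → 1; that is, in the nonrelativistic limit the energy density of the noninteracting neutron gas is asymptotic to the fermion number density n(μ) = μ^{3/2}. -/

import Mathlib

open Filter

/-- Dimensionless energy density of a noninteracting neutron gas. -/
noncomputable def g (μ : ℝ) : ℝ :=
  (1/8) * ((6*μ + 3) * Real.sqrt (μ + μ^2) - 3 * Real.log (Real.sqrt μ + Real.sqrt (1 + μ)))

lemma key_identity (a b : ℝ) (ha : 0 < a) (hb : 0 < b) (h : b^2 = 1 + a^2) :
    (3/2) * (a*b) =
    1/8 * ((6*1+0) * (a*b) + (6*a^2+3) * ((1+2*a^2)/(2*(a*b))) -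
      3 * ((1/(2*a)+(0+1)/(2*b))/(a+b))) := by
  have hab : (0:ℝ) < a + b := by linarith
  field_simp
  linear_combination (12*a^2*(a+b)) * h

lemma g_deriv {μ : ℝ} (hμ : 0 < μ) :
    HasDerivAt g ((3/2) * Real.sqrt (μ + μ^2)) μ := by
  have hs : 0 < μ + μ^2 := by positivity
  have hsμ : (0:ℝ) < Real.sqrt μ := Real.sqrt_pos.mpr hμ
  have hs1 : (0:ℝ) < Real.sqrt (1 + μ) := Real.sqrt_pos.mpr (by linarith)
  have hmul : Real.sqrt μ * Real.sqrt (1 + μ) = Real.sqrt (μ + μ^2) := by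
    rw [← Real.sqrt_mul hμ.le]; ring_nf
  have hμ2 : Real.sqrt μ ^ 2 = μ := Real.sq_sqrt hμ.le
  have h12 : Real.sqrt (1 + μ) ^ 2 = 1 + Real.sqrt μ ^ 2 := by
    rw [hμ2]; exact Real.sq_sqrt (by linarith)
  have h1 : HasDerivAt (fun x : ℝ => Real.sqrt (x + x^2))
      ((1 + 2*μ^1) / (2 * Real.sqrt (μ + μ^2))) μ :=
    ((hasDerivAt_id μ).add (hasDerivAt_pow 2 μ)).sqrt hs.ne'
  have h2 : HasDerivAt (fun x : ℝ => Real.sqrt x + Real.sqrt (1 + x))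
      (1 / (2 * Real.sqrt μ) + (0 + 1) / (2 * Real.sqrt (1 + μ))) μ :=
    (Real.hasDerivAt_sqrt hμ.ne').add
      (((hasDerivAt_const μ (1:ℝ)).add (hasDerivAt_id μ)).sqrt (ne_of_gt (by show (0:ℝ) < 1 + μ; linarith)))
  have h3 : HasDerivAt (fun x : ℝ => Real.log (Real.sqrt x + Real.sqrt (1 + x)))
      ((1 / (2 * Real.sqrt μ) + (0 + 1) / (2 * Real.sqrt (1 + μ))) /
        (Real.sqrt μ + Real.sqrt (1 + μ))) μ :=
    h2.log (by positivity)
  have h4 : HasDerivAt (fun x : ℝ => (6*x + 3)) (6*1 + 0) μ :=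
    ((hasDerivAt_id μ).const_mul 6).add (hasDerivAt_const μ 3)
  have h5 := ((h4.mul h1).sub (h3.const_mul 3)).const_mul (1/8 : ℝ)
  convert (show HasDerivAt g _ μ from h5) using 1
  rw [← hmul, pow_one, ← hμ2]
  have := key_identity (Real.sqrt μ) (Real.sqrt (1+μ)) hsμ hs1 h12
  rw [hμ2] at this ⊢
  convert this using 2

/-- As μ → 0⁺, g(μ)/μ^{3/2} → 1: in the nonrelativistic limit the energy density is
    asymptotic to the fermion number density n(μ) = μ^{3/2}. -/
theorem nonrelativistic_limit_g :
    Tendsto (fun μ : ℝ => g μ / μ ^ ((3:ℝ)/2)) (nhdsWithin 0 (Set.Ioi 0)) (nhds 1) := by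
  apply HasDerivAt.lhopital_zero_nhdsGT
    (f' := fun μ : ℝ => (3/2) * Real.sqrt (μ + μ^2))
    (g' := fun μ : ℝ => (3/2) * μ ^ ((1:ℝ)/2))
  · filter_upwards [self_mem_nhdsWithin] with μ (hμ : 0 < μ)
    exact g_deriv hμ
  · filter_upwards [self_mem_nhdsWithin] with μ (hμ : 0 < μ)
    have h := Real.hasDerivAt_rpow_const (x := μ) (p := (3:ℝ)/2) (Or.inl hμ.ne')
    convert h using 2
    norm_num
  · filter_upwards [self_mem_nhdsWithin] with μ (hμ : 0 < μ)
    have : (0:ℝ) < μ ^ ((1:ℝ)/2) := Real.rpow_pos_of_pos hμ _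
    positivity
  · -- g → 0
    have hc : ContinuousAt g 0 := by
      have h1 : ContinuousAt (fun x : ℝ => Real.sqrt (x + x^2)) 0 := by fun_prop
      have h2 : ContinuousAt (fun x : ℝ => Real.log (Real.sqrt x + Real.sqrt (1 + x))) 0 := by
        apply ContinuousAt.log (by fun_prop)
        simp
      unfold g
      fun_prop
    have h0 : g 0 = 0 := by simp [g]
    have := hc.continuousWithinAt (s := Set.Ioi 0)
    rw [ContinuousWithinAt, h0] at this
    exact this
  · have hc : ContinuousAt (fun μ : ℝ => μ ^ ((3:ℝ)/2)) 0 :=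
      Real.continuousAt_rpow_const 0 _ (Or.inr (by norm_num))
    have := hc.continuousWithinAt (s := Set.Ioi 0)
    rw [ContinuousWithinAt] at this
    simpa [Real.zero_rpow (by norm_num : ((3:ℝ)/2) ≠ 0)] using this
  · have heq : ∀ᶠ μ in nhdsWithin (0:ℝ) (Set.Ioi 0),
        Real.sqrt (1 + μ) = (3/2) * Real.sqrt (μ + μ^2) / ((3/2) * μ ^ ((1:ℝ)/2)) := by
      filter_upwards [self_mem_nhdsWithin] with μ (hμ : 0 < μ)
      show Real.sqrt (1+μ) = _
      rw [show μ ^ ((1:ℝ)/2) = Real.sqrt μ from (Real.sqrt_eq_rpow μ).symm]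
      have hsμ : (0:ℝ) < Real.sqrt μ := Real.sqrt_pos.mpr hμ
      have hmul : Real.sqrt μ * Real.sqrt (1 + μ) = Real.sqrt (μ + μ^2) := by
        rw [← Real.sqrt_mul hμ.le]; ring_nf
      rw [← hmul]
      field_simp
    apply Tendsto.congr' heq
    have hc : ContinuousAt (fun μ : ℝ => Real.sqrt (1 + μ)) 0 := by fun_prop
    have := hc.continuousWithinAt (s := Set.Ioi 0)
    rw [ContinuousWithinAt] at this
    simpa using this
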